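/- Let (u^k_n, v^k_n) be a solution of the QLB scheme with h > 0, and suppose that for a given k ≥ 0 and n ∈ ℤ one has (|u^k_n|² + |v^k_n|²)h ≤ 1/2 and 4|β|·(|u^k_n|² + |v^k_n|²)h ≤ 1. Then 0 ≤ e^k_n ≤ 8|u^k_n|²|v^k_n|² + 8m(|u^k_n|² + |v^k_n|²), and with C_β = 8m + 16|β|m + 16|β| there holds | |u^{k+1}_{n+1}|² − |u^k_n|² |/h ≤ C_β(|u^k_n|² + |v^k_n|²) + C_β|u^k_n|²|v^k_n|² and | |v^{k+1}_{n−1}|² − |v^k_n|² |/h ≤ C_β(|u^k_n|² + |v^k_n|²) + C_β|u^k_n|²|v^k_n|². -/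

import Mathlib

open Complex

noncomputable section

/-- `G(u,v) = conj(u)·v + u·conj(v)`. -/
def Gc (u v : ℂ) : ℂ := (starRingEnd ℂ) u * v + u * (starRingEnd ℂ) v

/-- One step of the quantum lattice Boltzmann (QLB) scheme:
`a, b` are the values `u^k_n, v^k_n` and `a', b'` the values `u^{k+1}_{n+1}, v^{k+1}_{n-1}`. -/
def QLBStep (h m α β : ℝ) (a b a' b' : ℂ) : Prop :=
  a' - a = (Complex.I * (m : ℂ) * (h : ℂ) / 2) * (b' + b)
      + (Complex.I * (α : ℂ) * (h : ℂ) / 2) * (a' + a) * ((‖b‖ ^ 2 : ℝ) : ℂ)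
      + (Complex.I * (β : ℂ) * (h : ℂ) / 2) * (b' + b) * Gc a b
  ∧ b' - b = (Complex.I * (m : ℂ) * (h : ℂ) / 2) * (a' + a)
      + (Complex.I * (α : ℂ) * (h : ℂ) / 2) * (b' + b) * ((‖a‖ ^ 2 : ℝ) : ℂ)
      + (Complex.I * (β : ℂ) * (h : ℂ) / 2) * (a' + a) * Gc a b

/-- `(u, v)` is a solution of the QLB scheme. -/
def IsQLB (h m α β : ℝ) (u v : ℕ → ℤ → ℂ) : Prop :=
  ∀ (k : ℕ) (n : ℤ), QLBStep h m α β (u k n) (v k n) (u (k + 1) (n + 1)) (v (k + 1) (n - 1))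

lemma Gc_im (a b : ℂ) : (Gc a b).im = 0 := by
  simp [Gc, Complex.add_im, Complex.mul_im]; ring

lemma Gc_ofReal (a b : ℂ) : Gc a b = (((Gc a b).re : ℝ) : ℂ) := by
  apply Complex.ext
  · simp
  · simp [Gc_im]

lemma Gc_re_bound (a b : ℂ) : |(Gc a b).re| ≤ 2 * (‖a‖ * ‖b‖) := by
  have h1 : (Gc a b).re = 2 * ((starRingEnd ℂ) a * b).re := by
    simp [Gc, Complex.add_re, Complex.mul_re]; ring
  rw [h1, abs_mul]
  have := Complex.abs_re_le_norm ((starRingEnd ℂ) a * b)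
  simp only [norm_mul, Complex.norm_conj] at this
  nlinarith [abs_nonneg ((starRingEnd ℂ) a * b).re, abs_two (α := ℝ)]

lemma keyId (h m α β g : ℝ) (a b a' b' : ℂ)
    (heq : a' - a = (Complex.I * (m : ℂ) * (h : ℂ) / 2) * (b' + b)
      + (Complex.I * (α : ℂ) * (h : ℂ) / 2) * (a' + a) * ((‖b‖ ^ 2 : ℝ) : ℂ)
      + (Complex.I * (β : ℂ) * (h : ℂ) / 2) * (b' + b) * ((g : ℝ) : ℂ)) :
    ‖a'‖ ^ 2 - ‖a‖ ^ 2
      = -(h * (m + β * g) / 2) * ((b' + b) * (starRingEnd ℂ) (a' + a)).im := by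
  have hre := congrArg Complex.re heq
  have him := congrArg Complex.im heq
  simp only [Complex.sub_re, Complex.sub_im, Complex.add_re, Complex.add_im,
    Complex.mul_re, Complex.mul_im, Complex.div_re, Complex.div_im, Complex.I_re,
    Complex.I_im, Complex.ofReal_re, Complex.ofReal_im, Complex.normSq_apply,
    Complex.re_ofNat, Complex.im_ofNat] at hre him
  simp only [Complex.sq_norm, Complex.normSq_apply, Complex.mul_im, Complex.add_re,
    Complex.add_im, Complex.conj_re, Complex.conj_im]
  linear_combination (a'.re + a.re) * hre + (a'.im + a.im) * him

lemma stepBound (h m α β g : ℝ) (a b a' b' : ℂ)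
    (heq : a' - a = (Complex.I * (m : ℂ) * (h : ℂ) / 2) * (b' + b)
      + (Complex.I * (α : ℂ) * (h : ℂ) / 2) * (a' + a) * ((‖b‖ ^ 2 : ℝ) : ℂ)
      + (Complex.I * (β : ℂ) * (h : ℂ) / 2) * (b' + b) * ((g : ℝ) : ℂ)) :
    ‖a'‖ ≤ ‖a‖ + |h * (m + β * g) / 2| * ‖b' + b‖ := by
  set c : ℝ := α * h * (‖b‖ ^ 2) / 2 with hc
  have hrearr : a' * (1 - Complex.I * (c : ℂ))
      = a * (1 + Complex.I * (c : ℂ)) + Complex.I * ((h * (m + β * g) / 2 : ℝ) : ℂ) * (b' + b) := by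
    rw [hc]; push_cast at heq ⊢; linear_combination heq
  have hconj : (starRingEnd ℂ) (1 + Complex.I * (c : ℂ)) = 1 - Complex.I * (c : ℂ) := by
    simp [map_add, map_mul, Complex.conj_I, Complex.conj_ofReal]; ring
  have heqabs : ‖1 + Complex.I * (c : ℂ)‖ = ‖1 - Complex.I * (c : ℂ)‖ := by
    rw [← hconj, Complex.norm_conj]
  set t : ℝ := ‖1 - Complex.I * (c : ℂ)‖ with ht
  have ht1 : 1 ≤ t := by
    have h2 : t ^ 2 = 1 + c ^ 2 := by
      rw [ht, Complex.sq_norm, Complex.normSq_apply]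
      simp [Complex.sub_re, Complex.sub_im, Complex.mul_re, Complex.mul_im]
      ring
    nlinarith [norm_nonneg (1 - Complex.I * (c : ℂ)), sq_nonneg c]
  have hat : ‖a'‖ * t
      ≤ ‖a‖ * t + |h * (m + β * g) / 2| * ‖b' + b‖ := by
    calc ‖a'‖ * t = ‖a' * (1 - Complex.I * (c : ℂ))‖ := (norm_mul _ _).symm
      _ = ‖a * (1 + Complex.I * (c : ℂ))
            + Complex.I * ((h * (m + β * g) / 2 : ℝ) : ℂ) * (b' + b)‖ := by rw [hrearr]
      _ ≤ ‖a * (1 + Complex.I * (c : ℂ))‖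
            + ‖Complex.I * ((h * (m + β * g) / 2 : ℝ) : ℂ) * (b' + b)‖ :=
          norm_add_le _ _
      _ = ‖a‖ * t + |h * (m + β * g) / 2| * ‖b' + b‖ := by
          rw [norm_mul, heqabs, norm_mul, norm_mul, Complex.norm_I, Complex.norm_real, Real.norm_eq_abs]; ring
  nlinarith [norm_nonneg a', norm_nonneg a,
    mul_nonneg (abs_nonneg (h * (m + β * g) / 2)) (norm_nonneg (b' + b))]

set_option maxHeartbeats 1000000 in
lemma realEst (x y p q s h m B D : ℝ)
    (hx : 0 ≤ x) (hy : 0 ≤ y) (hp : 0 ≤ p) (hq : 0 ≤ q) (hs : 0 ≤ s)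
    (hB : 0 ≤ B) (hm : 0 ≤ m) (hh : 0 < h)
    (hcons : p^2 + q^2 = x^2 + y^2)
    (hs2 : s^2 = x^2 + y^2)
    (hxs : x ≤ s) (hys : y ≤ s) (hps : p ≤ s) (hqs : q ≤ s)
    (hsm1 : s^2*h ≤ 1/2) (hsm2 : 4*B*(s^2*h) ≤ 1)
    (hpb : p ≤ x + h*(m+2*B*(x*y))/2*(q+y))
    (hqb : q ≤ y + h*(m+2*B*(x*y))/2*(p+x))
    (hD : |D| ≤ h*(m+2*B*(x*y))/2*((q+y)*(p+x))) :
    ((p^2+x^2)*y^2 + (q^2+y^2)*x^2 ≤ 8*(x^2*y^2) + 8*m*(x^2+y^2)) ∧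
    |D|/h ≤ (8*m+16*B*m+16*B)*(x^2+y^2) + (8*m+16*B*m+16*B)*(x^2*y^2) := by
  have hK : (0:ℝ) ≤ h*(m+2*B*(x*y))/2 := by positivity
  have hxy2 : x*y ≤ s^2/2 := by nlinarith [sq_nonneg (x-y), hs2]
  have hxynn : (0:ℝ) ≤ x*y := mul_nonneg hx hy
  have hsm2' : B*(s^2*h) ≤ 1/4 := by linarith
  have c0 : (0:ℝ) ≤ m*h*s^2 := by positivity
  have hq3 : q ≤ 3/2*y + m*h*s := by
    have e1 : h*(m+2*B*(x*y))/2*(p+x) ≤ h*(m+2*B*(x*y))/2*(2*s) :=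
      mul_le_mul_of_nonneg_left (by linarith) hK
    have e2 : x*(2*B*h*s*y) ≤ s*(2*B*h*s*y) :=
      mul_le_mul_of_nonneg_right hxs (by positivity)
    have e3 : (0:ℝ) ≤ (1 - 4*B*(s^2*h)) * y := mul_nonneg (by linarith) hy
    linarith [hqb, e1, e2, e3]
  have hp3 : p ≤ 3/2*x + m*h*s := by
    have e1 : h*(m+2*B*(x*y))/2*(q+y) ≤ h*(m+2*B*(x*y))/2*(2*s) :=
      mul_le_mul_of_nonneg_left (by linarith) hK
    have e2 : y*(2*B*h*s*x) ≤ s*(2*B*h*s*x) :=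
      mul_le_mul_of_nonneg_right hys (by positivity)
    have e3 : (0:ℝ) ≤ (1 - 4*B*(s^2*h)) * x := mul_nonneg (by linarith) hx
    linarith [hpb, e1, e2, e3]
  rcases le_or_gt (m*h) (1/2) with hmh | hmh
  · -- Case A : m*h ≤ 1/2
    constructor
    · have t1 : m*h*(s^2*h) ≤ (1/2)*(1/2) :=
        mul_le_mul hmh hsm1 (by positivity) (by norm_num)
      have hp2 : p^2 ≤ (3/2*x + m*h*s)^2 := pow_le_pow_left₀ hp hp3 2
      have hq2 : q^2 ≤ (3/2*y + m*h*s)^2 := pow_le_pow_left₀ hq hq3 2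
      have t2 : (m*h*s)^2 ≤ m/4 := by
        have w := mul_le_mul_of_nonneg_left t1 hm
        linarith [w]
      have hp2' : p^2 ≤ 3*x^2 + m := by
        linarith [hp2, sq_nonneg (x/2 - m*h*s), t2]
      have hq2' : q^2 ≤ 3*y^2 + m := by
        linarith [hq2, sq_nonneg (y/2 - m*h*s), t2]
      have A1 : p^2*y^2 ≤ (3*x^2+m)*y^2 := mul_le_mul_of_nonneg_right hp2' (sq_nonneg y)
      have A2 : q^2*x^2 ≤ (3*y^2+m)*x^2 := mul_le_mul_of_nonneg_right hq2' (sq_nonneg x)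
      linarith [A1, A2, mul_nonneg hm (sq_nonneg x), mul_nonneg hm (sq_nonneg y)]
    · have hqy : q + y ≤ 5/2*y + m*h*s := by linarith
      have hpx : p + x ≤ 5/2*x + m*h*s := by linarith
      have hprod : (q+y)*(p+x) ≤ (5/2*y + m*h*s)*(5/2*x + m*h*s) :=
        mul_le_mul hqy hpx (by linarith) (by positivity)
      have hDK : |D| ≤ h*(m+2*B*(x*y))/2 * ((5/2*y + m*h*s)*(5/2*x + m*h*s)) :=
        le_trans hD (mul_le_mul_of_nonneg_left hprod hK)
      have e1 : (25/8)*(h*m*(x*y)) ≤ (25/16)*(m*h*s^2) := by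
        linarith [mul_le_mul_of_nonneg_left hxy2 (mul_nonneg hh.le hm)]
      have e2 : (5/4)*(m^2*h^2*s*(x+y)) ≤ (5/4)*(m*h*s^2) := by
        have w1 : m^2*h^2*s*(x+y) ≤ m^2*h^2*s*(2*s) :=
          mul_le_mul_of_nonneg_left (by linarith) (by positivity)
        have w2 : (0:ℝ) ≤ (1/2 - m*h)*(m*h*s^2) := mul_nonneg (by linarith) c0
        linarith [w1, w2]
      have c2 : (m*h)*(m*h) ≤ (1/2)*(1/2) :=
        mul_le_mul hmh hmh (by positivity) (by norm_num)
      have e3 : (1/2)*(m^3*h^3*s^2) ≤ (1/8)*(m*h*s^2) := by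
        have w := mul_le_mul_of_nonneg_left c2 (show (0:ℝ) ≤ m*h*s^2/2 by positivity)
        linarith [w]
      have w1 : x*y*(x+y) ≤ s^3 := by
        have u1 : x*y*(x+y) ≤ s^2/2*(x+y) :=
          mul_le_mul_of_nonneg_right hxy2 (by linarith)
        have u2 : s^2/2*(x+y) ≤ s^2/2*(2*s) :=
          mul_le_mul_of_nonneg_left (by linarith) (by positivity)
        linarith [u1, u2]
      have e5 : (5/2)*(B*m*h^2*s*(x*y*(x+y))) ≤ (5/8)*(m*h*s^2) := by
        have u1 : B*m*h^2*s*(x*y*(x+y)) ≤ B*m*h^2*s*s^3 :=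
          mul_le_mul_of_nonneg_left w1 (by positivity)
        have u2 : (0:ℝ) ≤ (1/4 - B*(s^2*h))*(m*h*s^2) := mul_nonneg (by linarith) c0
        linarith [u1, u2]
      have c1 : (m*h)*(B*(s^2*h)) ≤ (1/2)*(1/4) :=
        mul_le_mul hmh hsm2' (by positivity) (by norm_num)
      have e6 : B*m^2*h^3*s^2*(x*y) ≤ (1/16)*(m*h*s^2) := by
        have u1 : B*m^2*h^3*s^2*(x*y) ≤ B*m^2*h^3*s^2*(s^2/2) :=
          mul_le_mul_of_nonneg_left hxy2 (by positivity)
        have u2 : (0:ℝ) ≤ (1/8 - (m*h)*(B*(s^2*h)))*(m*h*s^2) := mul_nonneg (by linarith) c0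
        linarith [u1, u2]
      have e4 : (0:ℝ) ≤ h*B*(x^2*y^2) :=
        mul_nonneg (mul_nonneg hh.le hB) (mul_nonneg (sq_nonneg x) (sq_nonneg y))
      have hfin : h*(m+2*B*(x*y))/2 * ((5/2*y + m*h*s)*(5/2*x + m*h*s))
          ≤ h*(8*m*s^2 + 16*B*(x^2*y^2)) := by
        linarith [e1, e2, e3, e5, e6, c0, e4]
      rw [div_le_iff₀ hh]
      have hrhs : h*(8*m*s^2 + 16*B*(x^2*y^2))
          ≤ ((8*m+16*B*m+16*B)*(x^2+y^2) + (8*m+16*B*m+16*B)*(x^2*y^2))*h := by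
        rw [hs2]
        have w1 : (0:ℝ) ≤ (16*B*m+16*B)*(x^2+y^2)*h := by positivity
        have w2 : (0:ℝ) ≤ (8*m+16*B*m)*(x^2*y^2)*h := by positivity
        linarith [w1, w2]
      linarith [le_trans hDK hfin]
  · -- Case B : 1/2 < m*h
    have hsm : s^2 ≤ m :=
      le_of_lt (lt_of_mul_lt_mul_right (by linarith : s^2*h < m*h) hh.le)
    have hp2s : p^2 ≤ s^2 := by linarith [hcons, sq_nonneg q, hs2]
    have hq2s : q^2 ≤ s^2 := by linarith [hcons, sq_nonneg p, hs2]
    have hms2 : m*s^2 = m*(x^2+y^2) := by rw [hs2]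
    constructor
    · have hs4 : s^2*s^2 ≤ m*s^2 := mul_le_mul_of_nonneg_right hsm (sq_nonneg s)
      have hss : s^2*s^2 = s^2*(x^2+y^2) := by rw [hs2]
      have A1 : p^2*y^2 ≤ s^2*y^2 := mul_le_mul_of_nonneg_right hp2s (sq_nonneg y)
      have A2 : q^2*x^2 ≤ s^2*x^2 := mul_le_mul_of_nonneg_right hq2s (sq_nonneg x)
      have hs2xy : s^2*(x^2+y^2) = s^2*x^2 + s^2*y^2 := by ring
      linarith [A1, A2, hs4, hms2, hss, mul_nonneg hm (sq_nonneg x),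
        mul_nonneg hm (sq_nonneg y), mul_nonneg (sq_nonneg x) (sq_nonneg y)]
    · have hP4 : (q+y)*(p+x) ≤ 2*s*(2*s) :=
        mul_le_mul (by linarith) (by linarith) (by linarith) (by positivity)
      have hDK : |D| ≤ h*(m+2*B*(x*y))/2 * (2*s*(2*s)) :=
        le_trans hD (mul_le_mul_of_nonneg_left hP4 hK)
      have e4 : (0:ℝ) ≤ h*B*(x^2*y^2) :=
        mul_nonneg (mul_nonneg hh.le hB) (mul_nonneg (sq_nonneg x) (sq_nonneg y))
      have hfin : h*(m+2*B*(x*y))/2 * (2*s*(2*s)) ≤ h*(8*m*s^2 + 16*B*(x^2*y^2)) := by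
        have u1 : 2*B*(x*y)*h*(2*s*s) ≤ 2*B*(s^2/2)*h*(2*s*s) := by
          have := mul_le_mul_of_nonneg_left hxy2 (show (0:ℝ) ≤ 2*B*h*(2*s*s) by positivity)
          linarith [this]
        have u2 : (0:ℝ) ≤ (1/4 - B*(s^2*h))*s^2 := mul_nonneg (by linarith) (sq_nonneg s)
        have u3 : (0:ℝ) ≤ (m*h - 1/2)*s^2 := mul_nonneg (by linarith) (sq_nonneg s)
        linarith [u1, u2, u3, c0, e4]
      rw [div_le_iff₀ hh]
      have hrhs : h*(8*m*s^2 + 16*B*(x^2*y^2))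
          ≤ ((8*m+16*B*m+16*B)*(x^2+y^2) + (8*m+16*B*m+16*B)*(x^2*y^2))*h := by
        rw [hs2]
        have w1 : (0:ℝ) ≤ (16*B*m+16*B)*(x^2+y^2)*h := by positivity
        have w2 : (0:ℝ) ≤ (8*m+16*B*m)*(x^2*y^2)*h := by positivity
        linarith [w1, w2]
      linarith [le_trans hDK hfin]

set_option maxHeartbeats 1000000 in
/-- Local evolution estimates under the smallness condition
`(|u^k_n|² + |v^k_n|²)h ≤ min{1/(4|β|), 1/2}`, with `C_β = 8m + 16|β|m + 16|β|`. -/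
theorem stmt6 (h m α β : ℝ) (hh0 : 0 < h) (hm : 0 ≤ m)
    (u v : ℕ → ℤ → ℂ) (huv : IsQLB h m α β u v) (k : ℕ) (n : ℤ)
    (hsmall1 : (‖u k n‖ ^ 2 + ‖v k n‖ ^ 2) * h ≤ 1 / 2)
    (hsmall2 : 4 * |β| * ((‖u k n‖ ^ 2 + ‖v k n‖ ^ 2) * h) ≤ 1) :
    let e : ℝ := (‖u (k + 1) (n + 1)‖ ^ 2 + ‖u k n‖ ^ 2) *
        ‖v k n‖ ^ 2
      + (‖v (k + 1) (n - 1)‖ ^ 2 + ‖v k n‖ ^ 2) *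
        ‖u k n‖ ^ 2
    let Cβ : ℝ := 8 * m + 16 * |β| * m + 16 * |β|
    (0 ≤ e ∧
      e ≤ 8 * (‖u k n‖ ^ 2 * ‖v k n‖ ^ 2)
        + 8 * m * (‖u k n‖ ^ 2 + ‖v k n‖ ^ 2)) ∧
    |‖u (k + 1) (n + 1)‖ ^ 2 - ‖u k n‖ ^ 2| / h
      ≤ Cβ * (‖u k n‖ ^ 2 + ‖v k n‖ ^ 2)
        + Cβ * (‖u k n‖ ^ 2 * ‖v k n‖ ^ 2) ∧
    |‖v (k + 1) (n - 1)‖ ^ 2 - ‖v k n‖ ^ 2| / h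
      ≤ Cβ * (‖u k n‖ ^ 2 + ‖v k n‖ ^ 2)
        + Cβ * (‖u k n‖ ^ 2 * ‖v k n‖ ^ 2) := by
  intro e Cβ
  obtain ⟨heq1, heq2⟩ := huv k n
  set a : ℂ := u k n with ha
  set b : ℂ := v k n with hb
  set a' : ℂ := u (k + 1) (n + 1) with ha'
  set b' : ℂ := v (k + 1) (n - 1) with hb'
  rw [Gc_ofReal a b] at heq1 heq2
  set g : ℝ := (Gc a b).re with hg
  have hgb : |g| ≤ 2 * (‖a‖ * ‖b‖) := Gc_re_bound a b
  -- notation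
  set x : ℝ := ‖a‖ with hxd
  set y : ℝ := ‖b‖ with hyd
  set p : ℝ := ‖a'‖ with hpd
  set q : ℝ := ‖b'‖ with hqd
  have hx : 0 ≤ x := norm_nonneg a
  have hy : 0 ≤ y := norm_nonneg b
  have hp : 0 ≤ p := norm_nonneg a'
  have hq : 0 ≤ q := norm_nonneg b'
  -- key identities
  have hDa := keyId h m α β g a b a' b' heq1
  have hDb := keyId h m α β g b a b' a' heq2
  have hflip : ((a' + a) * (starRingEnd ℂ) (b' + b)).im
      = -(((b' + b) * (starRingEnd ℂ) (a' + a)).im) := by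
    simp [Complex.mul_im, Complex.conj_re, Complex.conj_im]; ring
  rw [hflip] at hDb
  have hcons : p ^ 2 + q ^ 2 = x ^ 2 + y ^ 2 := by
    rw [hpd, hqd, hxd, hyd]; linarith [hDa, hDb]
  -- coefficient bound
  have hmg : |m + β * g| ≤ m + 2 * |β| * (x * y) := by
    have h1 : |m + β * g| ≤ |m| + |β * g| := abs_add_le _ _
    have h2 : |β| * |g| ≤ |β| * (2 * (x * y)) := by
      have := mul_le_mul_of_nonneg_left hgb (abs_nonneg β)
      rw [hxd, hyd]; linarith
    rw [_root_.abs_of_nonneg hm, abs_mul] at h1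
    linarith
  have hCoef : |h * (m + β * g) / 2| ≤ h * (m + 2 * |β| * (x * y)) / 2 := by
    have h1 : |h * (m + β * g) / 2| = h * |m + β * g| / 2 := by
      rw [abs_div, abs_mul, _root_.abs_of_nonneg hh0.le, (by norm_num : |(2:ℝ)| = 2)]
    rw [h1]
    gcongr
  -- imaginary part bound
  have hJ : |((b' + b) * (starRingEnd ℂ) (a' + a)).im| ≤ (q + y) * (p + x) := by
    calc |((b' + b) * (starRingEnd ℂ) (a' + a)).im|
        ≤ ‖(b' + b) * (starRingEnd ℂ) (a' + a)‖ := Complex.abs_im_le_norm _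
      _ = ‖b' + b‖ * ‖a' + a‖ := by rw [norm_mul, Complex.norm_conj]
      _ ≤ (q + y) * (p + x) := by
          apply mul_le_mul (norm_add_le _ _) (norm_add_le _ _)
            (norm_nonneg _) (by positivity)
  have hKnn : (0:ℝ) ≤ h * (m + 2 * |β| * (x * y)) / 2 := by positivity
  have hDabs1 : |p ^ 2 - x ^ 2|
      ≤ h * (m + 2 * |β| * (x * y)) / 2 * ((q + y) * (p + x)) := by
    rw [hpd, hxd, hDa, abs_mul, abs_neg]
    exact mul_le_mul hCoef hJ (abs_nonneg _) hKnn
  have hDb' : ‖b'‖ ^ 2 - ‖b‖ ^ 2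
      = (h * (m + β * g) / 2) * ((b' + b) * (starRingEnd ℂ) (a' + a)).im := by
    rw [hDb]; ring
  have hDabs2 : |q ^ 2 - y ^ 2|
      ≤ h * (m + 2 * |β| * (x * y)) / 2 * ((q + y) * (p + x)) := by
    rw [hqd, hyd, hDb', abs_mul]
    exact mul_le_mul hCoef hJ (abs_nonneg _) hKnn
  -- a-priori step bounds
  have hpb : p ≤ x + h * (m + 2 * |β| * (x * y)) / 2 * (q + y) := by
    have h0 := stepBound h m α β g a b a' b' heq1
    have h1 : |h * (m + β * g) / 2| * ‖b' + b‖
        ≤ h * (m + 2 * |β| * (x * y)) / 2 * (q + y) :=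
      mul_le_mul hCoef (norm_add_le _ _) (norm_nonneg _) hKnn
    rw [hpd, hxd]; linarith
  have hqb : q ≤ y + h * (m + 2 * |β| * (x * y)) / 2 * (p + x) := by
    have h0 := stepBound h m α β g b a b' a' heq2
    have h1 : |h * (m + β * g) / 2| * ‖a' + a‖
        ≤ h * (m + 2 * |β| * (x * y)) / 2 * (p + x) :=
      mul_le_mul hCoef (norm_add_le _ _) (norm_nonneg _) hKnn
    rw [hqd, hyd]; linarith
  -- sqrt of total mass
  set s : ℝ := Real.sqrt (x ^ 2 + y ^ 2) with hsd
  have hs : 0 ≤ s := Real.sqrt_nonneg _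
  have hs2 : s ^ 2 = x ^ 2 + y ^ 2 := Real.sq_sqrt (by positivity)
  have hxs : x ≤ s := by nlinarith [sq_nonneg y]
  have hys : y ≤ s := by nlinarith [sq_nonneg x]
  have hps : p ≤ s := by nlinarith [sq_nonneg q]
  have hqs : q ≤ s := by nlinarith [sq_nonneg p]
  have hsm1 : s ^ 2 * h ≤ 1 / 2 := by rw [hs2]; exact hsmall1
  have hsm2 : 4 * |β| * (s ^ 2 * h) ≤ 1 := by rw [hs2]; exact hsmall2
  have R1 := realEst x y p q s h m (|β|) (p ^ 2 - x ^ 2) hx hy hp hq hs (abs_nonneg β)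
    hm hh0 hcons hs2 hxs hys hps hqs hsm1 hsm2 hpb hqb hDabs1
  have R2 := realEst x y p q s h m (|β|) (q ^ 2 - y ^ 2) hx hy hp hq hs (abs_nonneg β)
    hm hh0 hcons hs2 hxs hys hps hqs hsm1 hsm2 hpb hqb hDabs2
  refine ⟨⟨by positivity, R1.1⟩, R1.2, R2.2⟩

end
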